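/- Let G be a finite connected simple graph with independent boundary B, |B| = m ≥ 2, and injective boundary data u. The number of acyclic orientations of G that respect u equals α(Ĝ)/m!, where Ĝ is obtained from G by adding an edge between every pair of boundary nodes and α(Ĝ) = |χ_Ĝ(−1)| is the number of acyclic orientations of Ĝ. -/

import Mathlib

namespace SC

open Relation

variable {V : Type*}

def Acyc (r : V → V → Prop) : Prop := ∀ v, ¬ Relation.TransGen r v v

def OG (H : SimpleGraph V) (o : V → V → Prop) : Prop :=
  (∀ i j, o i j → H.Adj i j) ∧ (∀ i j, H.Adj i j → (o i j ↔ ¬ o j i)) ∧ Acyc o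

structure IsTT (B : Set V) (τ : V → V → Prop) : Prop where
  mem : ∀ a b, τ a b → a ∈ B ∧ b ∈ B ∧ a ≠ b
  tot : ∀ a b, a ∈ B → b ∈ B → a ≠ b → (τ a b ↔ ¬ τ b a)
  tr : ∀ a b c, τ a b → τ b c → τ a c

def Compat (B : Set V) (σ τ : V → V → Prop) : Prop :=
  ∀ a b, a ∈ B → b ∈ B → Relation.TransGen σ a b → τ a b

lemma transGen_lt {r : V → V → Prop} {f : V → ℕ} (h : ∀ x y, r x y → f x < f y)
    {x y : V} (hxy : TransGen r x y) : f x < f y := by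
  induction hxy with
  | single h1 => exact h _ _ h1
  | tail h1 h2 ih => exact ih.trans (h _ _ h2)

lemma acyc_of_lt {r : V → V → Prop} {f : V → ℕ} (h : ∀ x y, r x y → f x < f y) : Acyc r :=
  fun v hv => lt_irrefl _ (transGen_lt h hv)

noncomputable def rnk (r : V → V → Prop) (v : V) : ℕ :=
  {w | TransGen r w v}.ncard

lemma rnk_lt [Finite V] {r : V → V → Prop} (hr : Acyc r) {x y : V} (hxy : r x y) :
    rnk r x < rnk r y := by
  apply Set.ncard_lt_ncard
  · constructor
    · intro w hw; exact hw.tail hxy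
    · intro hsub
      exact hr x (hsub (TransGen.single hxy))
  · exact Set.toFinite _

lemma rnk_le_card [Fintype V] (r : V → V → Prop) (v : V) : rnk r v ≤ Fintype.card V := by
  have := Set.ncard_le_ncard (Set.subset_univ {w | TransGen r w v}) Set.finite_univ
  simpa [rnk, Set.ncard_univ, Nat.card_eq_fintype_card] using this

lemma reflTransGen_cases {r : V → V → Prop} {x y : V} (h : ReflTransGen r x y) :
    x = y ∨ TransGen r x y := by
  rcases (Relation.reflTransGen_iff_eq_or_transGen.mp h) with h | h
  · exact Or.inl h.symm
  · exact Or.inr h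

/-- decomposition of paths in a union σ ∪ τ -/
lemma union_decomp {B : Set V} {σ τ : V → V → Prop} (ht : IsTT B τ) (hc : Compat B σ τ)
    {x y : V} (h : TransGen (fun a b => σ a b ∨ τ a b) x y) :
    TransGen σ x y ∨ ∃ b c, τ b c ∧ ReflTransGen σ x b ∧ ReflTransGen σ c y := by
  induction h with
  | single h1 =>
    rcases h1 with h1 | h1
    · exact Or.inl (TransGen.single h1)
    · exact Or.inr ⟨_, _, h1, ReflTransGen.refl, ReflTransGen.refl⟩
  | @tail b c h1 h2 ih =>
    rcases h2 with h2 | h2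
    · rcases ih with ih | ⟨p, q, hpq, hxp, hqb⟩
      · exact Or.inl (ih.tail h2)
      · exact Or.inr ⟨p, q, hpq, hxp, hqb.tail h2⟩
    · rcases ih with ih | ⟨p, q, hpq, hxp, hqb⟩
      · exact Or.inr ⟨b, c, h2, ih.to_reflTransGen, ReflTransGen.refl⟩
      · refine Or.inr ⟨p, c, ?_, hxp, ReflTransGen.refl⟩
        rcases reflTransGen_cases hqb with rfl | hqb'
        · exact ht.tr _ _ _ hpq h2
        · exact ht.tr _ _ _ (ht.tr _ _ _ hpq
            (hc _ _ (ht.mem _ _ hpq).2.1 (ht.mem _ _ h2).1 hqb')) h2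

lemma union_acyc {B : Set V} {σ τ : V → V → Prop} (hs : Acyc σ) (ht : IsTT B τ)
    (hc : Compat B σ τ) : Acyc (fun a b => σ a b ∨ τ a b) := by
  intro v hv
  rcases union_decomp ht hc hv with h | ⟨p, q, hpq, hvp, hqv⟩
  · exact hs v h
  · have hqp : ReflTransGen σ q p := hqv.trans hvp
    rcases reflTransGen_cases hqp with rfl | hqp'
    · exact (ht.mem _ _ hpq).2.2 rfl
    · have := hc _ _ (ht.mem _ _ hpq).2.1 (ht.mem _ _ hpq).1 hqp'
      exact ((ht.tot _ _ (ht.mem _ _ hpq).1 (ht.mem _ _ hpq).2.1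
        (ht.mem _ _ hpq).2.2).mp hpq) this

section hat

variable {G Ghat : SimpleGraph V} {B : Set V}

lemma trans_two {o : V → V → Prop} {a b c : V} (h1 : o a b) (h2 : o b c) :
    TransGen o a c := (TransGen.single h1).tail h2

noncomputable def hatEquiv
    (hBindep : ∀ i ∈ B, ∀ j ∈ B, ¬ G.Adj i j)
    (hGhat : ∀ i j : V, Ghat.Adj i j ↔ (G.Adj i j ∨ (i ∈ B ∧ j ∈ B ∧ i ≠ j))) :
    {o : V → V → Prop // OG Ghat o} ≃
    {p : (V → V → Prop) × (V → V → Prop) // OG G p.1 ∧ IsTT B p.2 ∧ Compat B p.1 p.2} where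
  toFun := fun ⟨o, ho1, ho2, ho3⟩ => by
    refine ⟨(fun a b => o a b ∧ G.Adj a b, fun a b => o a b ∧ ¬ G.Adj a b), ?_, ?_, ?_⟩
    · refine ⟨fun a b h => h.2, fun a b hab => ?_, ?_⟩
      · have := ho2 a b ((hGhat a b).mpr (Or.inl hab))
        simp only [hab, hab.symm, and_true]
        tauto
      · intro v hv
        exact ho3 v (TransGen.mono (fun a b h => h.1) _ _ hv)
    · constructor
      · intro a b hab
        rcases (hGhat a b).mp (ho1 a b hab.1) with h | h
        · exact absurd h hab.2
        · exact h
      · intro a b ha hb hne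
        have hadj : Ghat.Adj a b := (hGhat a b).mpr (Or.inr ⟨ha, hb, hne⟩)
        have h1 : ¬ G.Adj a b := hBindep a ha b hb
        have h2 : ¬ G.Adj b a := hBindep b hb a ha
        have := ho2 a b hadj
        simp only [h1, h2, and_true, not_false_iff]
        tauto
      · intro a b c hab hbc
        have hGa : Ghat.Adj a b := ho1 a b hab.1
        have hGb : Ghat.Adj b c := ho1 b c hbc.1
        rcases (hGhat a b).mp hGa with h | hB1
        · exact absurd h hab.2
        rcases (hGhat b c).mp hGb with h | hB2
        · exact absurd h hbc.2
        have hac : a ≠ c := by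
          rintro rfl
          exact ho3 a (trans_two hab.1 hbc.1)
        have hadj : Ghat.Adj a c := (hGhat a c).mpr (Or.inr ⟨hB1.1, hB2.2.1, hac⟩)
        refine ⟨?_, hBindep a hB1.1 c hB2.2.1⟩
        by_contra hoc
        have : o c a := by have := ho2 a c hadj; tauto
        exact ho3 a ((trans_two hab.1 hbc.1).tail this)
    · intro a b ha hb htg
      have htg' : TransGen o a b := TransGen.mono (fun x y h => h.1) _ _ htg
      have hne : a ≠ b := by rintro rfl; exact ho3 a htg'
      have hadj : Ghat.Adj a b := (hGhat a b).mpr (Or.inr ⟨ha, hb, hne⟩)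
      have hnoba : ¬ o b a := fun h => ho3 a (htg'.tail h)
      have : o a b := by have := ho2 a b hadj; tauto
      exact ⟨this, hBindep a ha b hb⟩
  invFun := fun ⟨⟨σ, τ⟩, ⟨hs1, hs2, hs3⟩, ht, hc⟩ => by
    refine ⟨fun a b => σ a b ∨ τ a b, ?_, ?_, union_acyc hs3 ht hc⟩
    · intro a b h
      rcases h with h | h
      · exact (hGhat a b).mpr (Or.inl (hs1 a b h))
      · exact (hGhat a b).mpr (Or.inr (ht.mem a b h))
    · intro a b hab
      rcases (hGhat a b).mp hab with h | ⟨ha, hb, hne⟩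
      · have hτab : ¬ τ a b := fun hh => hBindep a (ht.mem a b hh).1 b (ht.mem a b hh).2.1 h
        have hτba : ¬ τ b a := fun hh => hBindep b (ht.mem b a hh).1 a (ht.mem b a hh).2.1 h.symm
        have := hs2 a b h
        tauto
      · have hσab : ¬ σ a b := fun hh => hBindep a ha b hb (hs1 a b hh)
        have hσba : ¬ σ b a := fun hh => hBindep b hb a ha (hs1 b a hh)
        have := ht.tot a b ha hb hne
        tauto
  left_inv := by
    rintro ⟨o, ho1, ho2, ho3⟩
    apply Subtype.ext
    funext a b
    simp only
    apply propext
    constructor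
    · rintro (⟨h, _⟩ | ⟨h, _⟩) <;> exact h
    · intro h
      by_cases hA : G.Adj a b
      · exact Or.inl ⟨h, hA⟩
      · exact Or.inr ⟨h, hA⟩
  right_inv := by
    rintro ⟨⟨σ, τ⟩, ⟨hs1, hs2, hs3⟩, ht, hc⟩
    apply Subtype.ext
    simp only [Prod.mk.injEq]
    constructor
    · funext a b
      apply propext
      constructor
      · rintro ⟨h | h, hA⟩
        · exact h
        · exact absurd hA (hBindep a (ht.mem a b h).1 b (ht.mem a b h).2.1)
      · intro h; exact ⟨Or.inl h, hs1 a b h⟩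
    · funext a b
      apply propext
      constructor
      · rintro ⟨h | h, hA⟩
        · exact absurd (hs1 a b h) hA
        · exact h
      · intro h
        exact ⟨Or.inr h, fun hA => hBindep a (ht.mem a b h).1 b (ht.mem a b h).2.1 hA⟩

end hat

section swap

/-- vertices on directed paths from `i` to `j` -/
def SS (σ : V → V → Prop) (i j : V) (v : V) : Prop :=
  ReflTransGen σ i v ∧ ReflTransGen σ v j

/-- reverse the relation `σ` inside the set `S` -/
def rev (S : V → Prop) (σ : V → V → Prop) : V → V → Prop :=
  fun x y => (S x ∧ S y ∧ σ y x) ∨ (¬(S x ∧ S y) ∧ σ x y)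

lemma rev_rev (S : V → Prop) (σ : V → V → Prop) : rev S (rev S σ) = σ := by
  funext x y
  apply propext
  simp only [rev]
  tauto

lemma rev_congr {S S' : V → Prop} (h : ∀ v, S v ↔ S' v) (σ : V → V → Prop) :
    rev S σ = rev S' σ := by
  have : S = S' := funext fun v => propext (h v)
  rw [this]

/-- paths between points of `S` reverse -/
lemma rev_path' {σ : V → V → Prop} {i j a b : V} (hb : SS σ i j b)
    (h : ReflTransGen σ a b) : SS σ i j a → ReflTransGen (rev (SS σ i j) σ) b a := by
  induction h using ReflTransGen.head_induction_on with
  | refl => exact fun _ => ReflTransGen.refl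
  | @head a' c' hstep hrest ih =>
    intro ha'
    have hc : SS σ i j c' := ⟨ha'.1.tail hstep, hrest.trans hb.2⟩
    exact (ih hc).tail (Or.inl ⟨hc, ha', hstep⟩)

lemma rev_path {σ : V → V → Prop} {i j a b : V} (ha : SS σ i j a) (hb : SS σ i j b)
    (h : ReflTransGen σ a b) : ReflTransGen (rev (SS σ i j) σ) b a :=
  rev_path' hb h ha

open Classical in
noncomputable def prt (σ : V → V → Prop) (i j : V) (v : V) : ℕ :=
  if SS σ i j v then 1 else if ReflTransGen σ i v then 2 else 0

open Classical in
noncomputable def fr [Fintype V] (σ : V → V → Prop) (i j : V) (v : V) : ℕ :=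
  prt σ i j v * (2 * Fintype.card V + 1) +
    (if SS σ i j v then Fintype.card V - rnk σ v else rnk σ v)

lemma rev_mono [Fintype V] {σ : V → V → Prop} {i j : V} (hacyc : Acyc σ) :
    ∀ x y, rev (SS σ i j) σ x y → fr σ i j x < fr σ i j y := by
  classical
  intro x y h
  have hbx : rnk σ x ≤ Fintype.card V := rnk_le_card σ x
  have hby : rnk σ y ≤ Fintype.card V := rnk_le_card σ y
  rcases h with ⟨hSx, hSy, hyx⟩ | ⟨hn, hxy⟩
  · have hr : rnk σ y < rnk σ x := rnk_lt hacyc hyx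
    simp only [fr, prt, if_pos hSx, if_pos hSy]
    omega
  · have hr : rnk σ x < rnk σ y := rnk_lt hacyc hxy
    by_cases hSx : SS σ i j x <;> by_cases hSy : SS σ i j y
    · exact absurd ⟨hSx, hSy⟩ hn
    · have hIy : ReflTransGen σ i y := hSx.1.tail hxy
      simp only [fr, prt, if_pos hSx, if_neg hSy, if_pos hIy]
      omega
    · have hD : ReflTransGen σ x j := ReflTransGen.head hxy hSy.2
      have hIx : ¬ ReflTransGen σ i x := fun hI => hSx ⟨hI, hD⟩
      simp only [fr, prt, if_neg hSx, if_pos hSy, if_neg hIx]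
      omega
    · by_cases hIx : ReflTransGen σ i x
      · have hIy : ReflTransGen σ i y := hIx.tail hxy
        simp only [fr, prt, if_neg hSx, if_neg hSy, if_pos hIx, if_pos hIy]
        omega
      · simp only [fr, prt, if_neg hSx, if_neg hSy, if_neg hIx]
        by_cases hIy : ReflTransGen σ i y
        · rw [if_pos hIy]; omega
        · rw [if_neg hIy]; omega

lemma rev_acyc [Fintype V] {σ : V → V → Prop} {i j : V} (hacyc : Acyc σ) :
    Acyc (rev (SS σ i j) σ) :=
  acyc_of_lt (rev_mono hacyc)

lemma rev_decomp {σ : V → V → Prop} {S : V → Prop} {x y : V}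
    (h : TransGen (rev S σ) x y) :
    TransGen σ x y ∨
      ∃ p q, S p ∧ S q ∧ ReflTransGen σ x p ∧ ReflTransGen σ q y := by
  induction h with
  | @single b h1 =>
    rcases h1 with ⟨hSx, hSb, hbx⟩ | ⟨_, hxb⟩
    · exact Or.inr ⟨x, b, hSx, hSb, ReflTransGen.refl, ReflTransGen.refl⟩
    · exact Or.inl (TransGen.single hxb)
  | @tail b c h1 h2 ih =>
    rcases h2 with ⟨hSb, hSc, hcb⟩ | ⟨_, hbc⟩
    · rcases ih with ih | ⟨p, q, hp, hq, hxp, hqb⟩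
      · exact Or.inr ⟨b, c, hSb, hSc, ih.to_reflTransGen, ReflTransGen.refl⟩
      · exact Or.inr ⟨p, c, hp, hSc, hxp, ReflTransGen.refl⟩
    · rcases ih with ih | ⟨p, q, hp, hq, hxp, hqb⟩
      · exact Or.inl (ih.tail hbc)
      · exact Or.inr ⟨p, q, hp, hq, hxp, hqb.tail hbc⟩

end swap

section swp

open Classical in
noncomputable def swp (τ : V → V → Prop) (i j : V) : V → V → Prop :=
  fun a b => if (a = i ∧ b = j) ∨ (a = j ∧ b = i) then τ b a else τ a b

variable {B : Set V} {τ : V → V → Prop} {i j : V}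

lemma swp_pos {a b : V} (h : (a = i ∧ b = j) ∨ (a = j ∧ b = i)) :
    swp τ i j a b ↔ τ b a := by
  unfold swp; rw [if_pos h]

lemma swp_neg {a b : V} (h : ¬ ((a = i ∧ b = j) ∨ (a = j ∧ b = i))) :
    swp τ i j a b ↔ τ a b := by
  unfold swp; rw [if_neg h]

lemma swp_cond_symm {a b : V} (h : (a = i ∧ b = j) ∨ (a = j ∧ b = i)) :
    (b = i ∧ a = j) ∨ (b = j ∧ a = i) := by tauto

lemma swp_swp : swp (swp τ i j) j i = τ := by
  classical
  funext a b
  apply propext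
  by_cases h : (a = i ∧ b = j) ∨ (a = j ∧ b = i)
  · have h' : (a = j ∧ b = i) ∨ (a = i ∧ b = j) := by tauto
    rw [swp_pos h', swp_pos (swp_cond_symm h)]
  · have h' : ¬ ((a = j ∧ b = i) ∨ (a = i ∧ b = j)) := by tauto
    rw [swp_neg h', swp_neg h]

lemma swp_ji (hij : τ i j) : swp τ i j j i :=
  (swp_pos (Or.inr ⟨rfl, rfl⟩)).mpr hij

lemma IsTT.asym (ht : IsTT B τ) {a b : V} (h : τ a b) : ¬ τ b a := by
  have hm := ht.mem a b h
  exact (ht.tot a b hm.1 hm.2.1 hm.2.2).mp h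

lemma swp_cases {a b : V} (h : swp τ i j a b) : τ a b ∨ τ b a := by
  classical
  by_cases hc : (a = i ∧ b = j) ∨ (a = j ∧ b = i)
  · exact Or.inr ((swp_pos hc).mp h)
  · exact Or.inl ((swp_neg hc).mp h)

variable (htt : IsTT B τ) (hij : τ i j) (hcov : ∀ k, ¬ (τ i k ∧ τ k j))
include htt hij hcov

lemma tau_h3 : ∀ x, x ≠ i → τ x j → τ x i := by
  intro x hxi hxj
  by_contra hxi'
  have hm := htt.mem x j hxj
  have : τ i x := by
    have := htt.tot x i hm.1 (htt.mem i j hij).1 hxi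
    tauto
  exact hcov x ⟨this, hxj⟩

lemma tau_h4 : ∀ x, x ≠ j → τ i x → τ j x := by
  intro x hxj hix
  by_contra hjx'
  have hm := htt.mem i x hix
  have : τ x j := by
    have := htt.tot x j hm.2.1 (htt.mem i j hij).2.1 hxj
    tauto
  exact hcov x ⟨hix, this⟩

lemma swp_tt : IsTT B (swp τ i j) := by
  classical
  have hne : i ≠ j := (htt.mem i j hij).2.2
  constructor
  · intro a b h
    rcases swp_cases h with h | h
    · exact htt.mem a b h
    · obtain ⟨h1, h2, h3⟩ := htt.mem b a h
      exact ⟨h2, h1, h3.symm⟩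
  · intro a b ha hb hab
    by_cases hc : (a = i ∧ b = j) ∨ (a = j ∧ b = i)
    · rw [swp_pos hc, swp_pos (swp_cond_symm hc)]
      exact htt.tot b a hb ha hab.symm
    · have hc' : ¬ ((b = i ∧ a = j) ∨ (b = j ∧ a = i)) := fun hh => hc (swp_cond_symm hh)
      rw [swp_neg hc, swp_neg hc']
      exact htt.tot a b ha hb hab
  · intro a b c hab hbc
    by_cases hcab : (a = i ∧ b = j) ∨ (a = j ∧ b = i)
    · rw [swp_pos hcab] at hab
      rcases hcab with ⟨hai, hbj⟩ | ⟨haj, hbi⟩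
      · rw [hai, hbj] at hab
        exact absurd hab (htt.asym hij)
      · -- a = j, b = i
        by_cases hcj : c = j
        · have hc2 : (b = i ∧ c = j) ∨ (b = j ∧ c = i) := Or.inl ⟨hbi, hcj⟩
          rw [swp_pos hc2, hbi, hcj] at hbc
          exact absurd hbc (htt.asym hij)
        · have hc2 : ¬ ((b = i ∧ c = j) ∨ (b = j ∧ c = i)) := by
            rintro (⟨_, h2⟩ | ⟨h1, _⟩)
            · exact hcj h2
            · rw [hbi] at h1; exact hne h1
          rw [swp_neg hc2, hbi] at hbc
          have hci : c ≠ i := (htt.mem i c hbc).2.2.symm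
          have hgoal : τ j c := tau_h4 htt hij hcov c hcj hbc
          have hc3 : ¬ ((a = i ∧ c = j) ∨ (a = j ∧ c = i)) := by
            rintro (⟨h1, _⟩ | ⟨_, h2⟩)
            · rw [haj] at h1; exact hne h1.symm
            · exact hci h2
          rw [swp_neg hc3, haj]
          exact hgoal
    · rw [swp_neg hcab] at hab
      by_cases hcbc : (b = i ∧ c = j) ∨ (b = j ∧ c = i)
      · rw [swp_pos hcbc] at hbc
        rcases hcbc with ⟨hbi, hcj⟩ | ⟨hbj, hci⟩
        · rw [hbi, hcj] at hbc
          exact absurd hbc (htt.asym hij)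
        · -- b = j, c = i
          rw [hbj] at hab
          have hai : a ≠ i := by
            rintro rfl
            exact hcab (Or.inl ⟨rfl, hbj⟩)
          have hgoal : τ a i := tau_h3 htt hij hcov a hai hab
          have haj : a ≠ j := (htt.mem a j hab).2.2
          have hc3 : ¬ ((a = i ∧ c = j) ∨ (a = j ∧ c = i)) := by tauto
          rw [swp_neg hc3, hci]
          exact hgoal
      · rw [swp_neg hcbc] at hbc
        have hac : τ a c := htt.tr a b c hab hbc
        by_cases hcac : (a = i ∧ c = j) ∨ (a = j ∧ c = i)
        · rcases hcac with ⟨hai, hcj⟩ | ⟨haj, hci⟩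
          · rw [hai] at hab; rw [hcj] at hbc
            exact absurd ⟨hab, hbc⟩ (hcov b)
          · rw [swp_pos (Or.inr ⟨haj, hci⟩), haj, hci]
            exact hij
        · rw [swp_neg hcac]
          exact hac

lemma swp_cov : ∀ k, ¬ (swp τ i j j k ∧ swp τ i j k i) := by
  classical
  have hne : i ≠ j := (htt.mem i j hij).2.2
  rintro k ⟨h1, h2⟩
  by_cases hki : k = i
  · have hc : ¬ ((k = i ∧ i = j) ∨ (k = j ∧ i = i)) := by
      rintro (⟨_, h⟩ | ⟨h, _⟩)
      · exact hne h
      · rw [hki] at h; exact hne h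
    rw [swp_neg hc, hki] at h2
    exact (htt.mem i i h2).2.2 rfl
  · by_cases hkj : k = j
    · have hc : ¬ ((j = i ∧ k = j) ∨ (j = j ∧ k = i)) := by tauto
      rw [swp_neg hc, hkj] at h1
      exact (htt.mem j j h1).2.2 rfl
    · have hc1 : ¬ ((j = i ∧ k = j) ∨ (j = j ∧ k = i)) := by tauto
      rw [swp_neg hc1] at h1
      have hc2 : ¬ ((k = i ∧ i = j) ∨ (k = j ∧ i = i)) := by tauto
      rw [swp_neg hc2] at h2
      exact hcov k ⟨htt.tr i j k hij h1, htt.tr k i j h2 hij⟩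

end swp

section swapmain

variable [Fintype V] {G : SimpleGraph V} {B : Set V} {τ σ : V → V → Prop} {i j : V}

lemma rev_OG (hOG : OG G σ) : OG G (rev (SS σ i j) σ) := by
  obtain ⟨h1, h2, h3⟩ := hOG
  refine ⟨?_, ?_, rev_acyc h3⟩
  · rintro x y (⟨_, _, h⟩ | ⟨_, h⟩)
    · exact (h1 y x h).symm
    · exact h1 x y h
  · intro x y hxy
    have ha := h2 x y hxy
    have hb := h2 y x hxy.symm
    by_cases hx : SS σ i j x <;> by_cases hy : SS σ i j y <;>
      simp only [rev] <;> tauto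

variable (htt : IsTT B τ) (hij : τ i j) (hcov : ∀ k, ¬ (τ i k ∧ τ k j))
  (hOG : OG G σ) (hcpt : Compat B σ τ)
include htt hij hcov hOG hcpt

lemma no_ji : ¬ TransGen σ j i := fun h =>
  htt.asym hij (hcpt j i (htt.mem i j hij).2.1 (htt.mem i j hij).1 h)

lemma no_ij' : ¬ TransGen (rev (SS σ i j) σ) i j := by
  intro h
  have hne : i ≠ j := (htt.mem i j hij).2.2
  have hacyc : Acyc σ := hOG.2.2
  have hrij : ReflTransGen σ i j := by
    rcases rev_decomp h with hL | ⟨p, q, hp, hq, hip, hqj⟩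
    · exact hL.to_reflTransGen
    · exact hip.trans hp.2
  have htij : TransGen σ i j := by
    rcases reflTransGen_cases hrij with h' | h'
    · exact absurd h' hne
    · exact h'
  have hSi : SS σ i j i := ⟨ReflTransGen.refl, htij.to_reflTransGen⟩
  have hSj : SS σ i j j := ⟨htij.to_reflTransGen, ReflTransGen.refl⟩
  have hr : rnk σ i < rnk σ j := transGen_lt (fun x y hh => rnk_lt hacyc hh) htij
  have hf1 : fr σ i j i < fr σ i j j := transGen_lt (rev_mono hacyc) h
  have hbj : rnk σ j ≤ Fintype.card V := rnk_le_card σ j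
  simp only [fr, prt, if_pos hSi, if_pos hSj] at hf1
  omega

lemma rev_compat : Compat B (rev (SS σ i j) σ) (swp τ i j) := by
  have hiB : i ∈ B := (htt.mem i j hij).1
  have hjB : j ∈ B := (htt.mem i j hij).2.1
  intro a b ha hb h
  have hab_ne : a ≠ b := by rintro rfl; exact rev_acyc hOG.2.2 a h
  by_cases hcab : (a = i ∧ b = j) ∨ (a = j ∧ b = i)
  · rcases hcab with ⟨hai, hbj⟩ | ⟨haj, hbi⟩
    · rw [hai, hbj] at h
      exact absurd h (no_ij' htt hij hcov hOG hcpt)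
    · rw [swp_pos (Or.inr ⟨haj, hbi⟩), hbi, haj]
      exact hij
  · rw [swp_neg hcab]
    rcases rev_decomp h with hL | ⟨p, q, hp, hq, hap, hqb⟩
    · exact hcpt a b ha hb hL
    · have haj' : ReflTransGen σ a j := hap.trans hp.2
      have hib' : ReflTransGen σ i b := hq.1.trans hqb
      rcases reflTransGen_cases haj' with haj | htaj
      · rcases reflTransGen_cases hib' with hbi | htib
        · exact absurd (Or.inr ⟨haj, hbi.symm⟩) hcab
        · have hτib : τ i b := hcpt i b hiB hb htib
          have hbj : b ≠ j := fun hh => hab_ne (haj.trans hh.symm)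
          rw [haj]
          exact tau_h4 htt hij hcov b hbj hτib
      · have hτaj : τ a j := hcpt a j ha hjB htaj
        rcases reflTransGen_cases hib' with hbi | htib
        · have hai : a ≠ i := fun hh => hab_ne (hh.trans hbi)
          rw [← hbi]
          exact tau_h3 htt hij hcov a hai hτaj
        · have hτib : τ i b := hcpt i b hiB hb htib
          by_cases hai : a = i
          · rw [hai]; exact hτib
          · by_cases hbj : b = j
            · rw [hbj]; exact hτaj
            · by_contra hnab
              have hτba : τ b a := (htt.tot b a hb ha hab_ne.symm).mpr hnab
              exact hcov a ⟨htt.tr i b a hτib hτba, hτaj⟩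

lemma SS_rev : ∀ v, SS (rev (SS σ i j) σ) j i v ↔ SS σ i j v := by
  have hne : i ≠ j := (htt.mem i j hij).2.2
  have hnoji : ¬ TransGen σ j i := no_ji htt hij hcov hOG hcpt
  have hS_ne : ∀ p, SS σ i j p → ReflTransGen σ i j := fun p hp => hp.1.trans hp.2
  intro v
  constructor
  · rintro ⟨h1, h2⟩
    have hIv : ReflTransGen σ i v := by
      rcases reflTransGen_cases h1 with hvj | ht1
      · rcases reflTransGen_cases h2 with hvi | ht2
        · exact absurd (hvj.trans hvi).symm hne
        · rcases rev_decomp ht2 with hL | ⟨p, q, hp, hq, hvp, hqi⟩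
          · rw [← hvj] at hL
            exact absurd hL hnoji
          · rw [← hvj]
            exact hS_ne p hp
      · rcases rev_decomp ht1 with hL | ⟨p, q, hp, hq, hjp, hqv⟩
        · rcases reflTransGen_cases h2 with hvi | ht2
          · rw [hvi] at hL
            exact absurd hL hnoji
          · rcases rev_decomp ht2 with hL2 | ⟨p, q, hp, hq, hvp, hqi⟩
            · exact absurd (hL.trans hL2) hnoji
            · exact (hS_ne p hp).trans hL.to_reflTransGen
        · exact hq.1.trans hqv
    have hDv : ReflTransGen σ v j := by
      rcases reflTransGen_cases h2 with hvi | ht2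
      · rcases reflTransGen_cases h1 with hvj | ht1
        · exact absurd (hvj.trans hvi).symm hne
        · rcases rev_decomp ht1 with hL | ⟨p, q, hp, hq, hjp, hqv⟩
          · rw [hvi] at hL
            exact absurd hL hnoji
          · rw [hvi]
            exact hS_ne p hp
      · rcases rev_decomp ht2 with hL | ⟨p, q, hp, hq, hvp, hqi⟩
        · have hrij : ReflTransGen σ i j := by
            rcases reflTransGen_cases h1 with hvj | ht1
            · rw [← hvj] at hL
              exact absurd hL hnoji
            · rcases rev_decomp ht1 with hL1 | ⟨p, q, hp, hq, hjp, hqv⟩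
              · exact absurd (hL1.trans hL) hnoji
              · exact hS_ne p hp
          exact hL.to_reflTransGen.trans hrij
        · exact hvp.trans hp.2
    exact ⟨hIv, hDv⟩
  · intro hv
    have hrij : ReflTransGen σ i j := hv.1.trans hv.2
    have hSi : SS σ i j i := ⟨ReflTransGen.refl, hrij⟩
    have hSj : SS σ i j j := ⟨hrij, ReflTransGen.refl⟩
    exact ⟨rev_path hv hSj hv.2, rev_path hSi hv hv.1⟩

end swapmain

section swapcard

variable [Fintype V] {G : SimpleGraph V} {B : Set V} {τ : V → V → Prop} {i j : V}

lemma swap_pack (htt : IsTT B τ) (hij : τ i j) (hcov : ∀ k, ¬ (τ i k ∧ τ k j))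
    {σ : V → V → Prop} (hOG : OG G σ) (hcpt : Compat B σ τ) :
    OG G (rev (SS σ i j) σ) ∧ Compat B (rev (SS σ i j) σ) (swp τ i j) ∧
      rev (SS (rev (SS σ i j) σ) j i) (rev (SS σ i j) σ) = σ := by
  refine ⟨rev_OG hOG, rev_compat htt hij hcov hOG hcpt, ?_⟩
  rw [rev_congr (SS_rev htt hij hcov hOG hcpt)]
  exact rev_rev _ _

lemma swap_card (htt : IsTT B τ) (hij : τ i j) (hcov : ∀ k, ¬ (τ i k ∧ τ k j)) :
    Nat.card {σ : V → V → Prop // OG G σ ∧ Compat B σ τ} =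
      Nat.card {σ : V → V → Prop // OG G σ ∧ Compat B σ (swp τ i j)} := by
  have htt' : IsTT B (swp τ i j) := swp_tt htt hij hcov
  have hij' : swp τ i j j i := swp_ji hij
  have hcov' : ∀ k, ¬ (swp τ i j j k ∧ swp τ i j k i) := swp_cov htt hij hcov
  refine Nat.card_congr ⟨?_, ?_, ?_, ?_⟩
  · rintro ⟨σ, h1, h2⟩
    exact ⟨rev (SS σ i j) σ, (swap_pack htt hij hcov h1 h2).1,
      (swap_pack htt hij hcov h1 h2).2.1⟩
  · rintro ⟨σ, h1, h2⟩
    refine ⟨rev (SS σ j i) σ, (swap_pack htt' hij' hcov' h1 h2).1, ?_⟩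
    have := (swap_pack htt' hij' hcov' h1 h2).2.1
    rwa [swp_swp] at this
  · rintro ⟨σ, h1, h2⟩
    exact Subtype.ext (swap_pack htt hij hcov h1 h2).2.2
  · rintro ⟨σ, h1, h2⟩
    exact Subtype.ext (swap_pack htt' hij' hcov' h1 h2).2.2

end swapcard

section connect

variable [Fintype V] {G : SimpleGraph V} {B : Set V}

open Classical in
noncomputable def inversions (τ τ' : V → V → Prop) : Finset (V × V) :=
  Finset.univ.filter (fun p => τ p.1 p.2 ∧ τ' p.2 p.1)

open Classical in
lemma mem_inversions {τ τ' : V → V → Prop} {p : V × V} :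
    p ∈ inversions τ τ' ↔ τ p.1 p.2 ∧ τ' p.2 p.1 := by
  simp [inversions]

lemma eq_of_no_inversions {τ τ' : V → V → Prop} (htt : IsTT B τ) (htt' : IsTT B τ')
    (h : inversions τ τ' = ∅) : τ = τ' := by
  funext a b
  apply propext
  constructor
  · intro hab
    by_contra hab'
    obtain ⟨ha, hb, hne⟩ := htt.mem a b hab
    have : τ' b a := by
      have := htt'.tot a b ha hb hne
      tauto
    have : (a, b) ∈ inversions τ τ' := mem_inversions.mpr ⟨hab, this⟩
    rw [h] at this
    exact absurd this (Finset.notMem_empty _)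
  · intro hab
    by_contra hab'
    obtain ⟨ha, hb, hne⟩ := htt'.mem a b hab
    have hba : τ b a := by
      have := htt.tot a b ha hb hne
      tauto
    have : (b, a) ∈ inversions τ τ' := mem_inversions.mpr ⟨hba, hab⟩
    rw [h] at this
    exact absurd this (Finset.notMem_empty _)

open Classical in
noncomputable def btw (τ : V → V → Prop) (a b : V) : Finset V :=
  Finset.univ.filter (fun k => τ a k ∧ τ k b)

open Classical in
lemma mem_btw {τ : V → V → Prop} {a b k : V} : k ∈ btw τ a b ↔ τ a k ∧ τ k b := by
  simp [btw]

lemma exists_cover_inv {τ τ' : V → V → Prop} (htt : IsTT B τ) (htt' : IsTT B τ')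
    (hne : (inversions τ τ').Nonempty) :
    ∃ i j, τ i j ∧ τ' j i ∧ (∀ k, ¬ (τ i k ∧ τ k j)) := by
  classical
  obtain ⟨p, hp, hmin⟩ := Finset.exists_min_image (inversions τ τ')
    (fun p => (btw τ p.1 p.2).card) hne
  obtain ⟨hp1, hp2⟩ := mem_inversions.mp hp
  set i := p.1
  set j := p.2
  refine ⟨i, j, hp1, hp2, ?_⟩
  rintro k ⟨hik, hkj⟩
  obtain ⟨hiB, hkB, hikne⟩ := htt.mem i k hik
  obtain ⟨_, hjB, hkjne⟩ := htt.mem k j hkj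
  by_cases hki' : τ' k i
  · have hmem : (i, k) ∈ inversions τ τ' := mem_inversions.mpr ⟨hik, hki'⟩
    have hsub : btw τ i k ⊂ btw τ i j := by
      constructor
      · intro x hx
        obtain ⟨h1, h2⟩ := mem_btw.mp hx
        exact mem_btw.mpr ⟨h1, htt.tr x k j h2 hkj⟩
      · intro hsub'
        have : k ∈ btw τ i k := hsub' (mem_btw.mpr ⟨hik, hkj⟩)
        exact (htt.mem k k (mem_btw.mp this).2).2.2 rfl
    have := hmin (i, k) hmem
    exact absurd this (not_le.mpr (Finset.card_lt_card hsub))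
  · have hik' : τ' i k := by
      have := htt'.tot i k hiB hkB hikne
      tauto
    by_cases hjk' : τ' j k
    · have hmem : (k, j) ∈ inversions τ τ' := mem_inversions.mpr ⟨hkj, hjk'⟩
      have hsub : btw τ k j ⊂ btw τ i j := by
        constructor
        · intro x hx
          obtain ⟨h1, h2⟩ := mem_btw.mp hx
          exact mem_btw.mpr ⟨htt.tr i k x hik h1, h2⟩
        · intro hsub'
          have : k ∈ btw τ k j := hsub' (mem_btw.mpr ⟨hik, hkj⟩)
          exact (htt.mem k k (mem_btw.mp this).1).2.2 rfl
      have := hmin (k, j) hmem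
      exact absurd this (not_le.mpr (Finset.card_lt_card hsub))
    · have hkj' : τ' k j := by
        have := htt'.tot k j hkB hjB hkjne
        tauto
      exact htt'.asym hp2 (htt'.tr i k j hik' hkj')

lemma inversions_swp {τ τ' : V → V → Prop} (htt : IsTT B τ) (htt' : IsTT B τ')
    {i j : V} (hij : τ i j) (hji' : τ' j i) :
    (inversions (swp τ i j) τ').card = (inversions τ τ').card - 1 := by
  classical
  have hmem : (i, j) ∈ inversions τ τ' := mem_inversions.mpr ⟨hij, hji'⟩
  have hset : inversions (swp τ i j) τ' = (inversions τ τ').erase (i, j) := by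
    ext ⟨a, b⟩
    rw [Finset.mem_erase, mem_inversions, mem_inversions]
    by_cases hc : (a = i ∧ b = j) ∨ (a = j ∧ b = i)
    · rcases hc with ⟨hai, hbj⟩ | ⟨haj, hbi⟩
      · rw [swp_pos (Or.inl ⟨hai, hbj⟩), hai, hbj]
        simp only [Prod.mk.injEq]
        constructor
        · rintro ⟨hji, _⟩
          exact absurd hji (htt.asym hij)
        · rintro ⟨hne, _, _⟩
          exact absurd rfl hne
      · rw [swp_pos (Or.inr ⟨haj, hbi⟩), haj, hbi]
        simp only [Prod.mk.injEq]
        constructor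
        · rintro ⟨_, hij'⟩
          exact absurd hij' (htt'.asym hji')
        · rintro ⟨_, hji, _⟩
          exact absurd hji (htt.asym hij)
    · rw [swp_neg hc]
      simp only [Prod.mk.injEq]
      constructor
      · rintro ⟨h1, h2⟩
        exact ⟨fun hh => hc (Or.inl ⟨congrArg Prod.fst hh, congrArg Prod.snd hh⟩), h1, h2⟩
      · rintro ⟨_, h1, h2⟩
        exact ⟨h1, h2⟩
  rw [hset, Finset.card_erase_of_mem hmem]

lemma card_compat_eq {τ τ' : V → V → Prop} (htt : IsTT B τ) (htt' : IsTT B τ') :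
    Nat.card {σ : V → V → Prop // OG G σ ∧ Compat B σ τ} =
      Nat.card {σ : V → V → Prop // OG G σ ∧ Compat B σ τ'} := by
  classical
  suffices H : ∀ n (τ : V → V → Prop), IsTT B τ → (inversions τ τ').card = n →
      Nat.card {σ : V → V → Prop // OG G σ ∧ Compat B σ τ} =
        Nat.card {σ : V → V → Prop // OG G σ ∧ Compat B σ τ'} by
    exact H _ τ htt rfl
  intro n
  induction n using Nat.strong_induction_on with
  | _ n ih =>
    intro τ htt hcard
    rcases Nat.eq_zero_or_pos n with rfl | hpos
    · have hemp : inversions τ τ' = ∅ := Finset.card_eq_zero.mp hcard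
      rw [eq_of_no_inversions htt htt' hemp]
    · have hne : (inversions τ τ').Nonempty := by
        rw [← Finset.card_pos, hcard]; exact hpos
      obtain ⟨i, j, hij, hji', hcov⟩ := exists_cover_inv htt htt' hne
      have h1 : Nat.card {σ : V → V → Prop // OG G σ ∧ Compat B σ τ} =
          Nat.card {σ : V → V → Prop // OG G σ ∧ Compat B σ (swp τ i j)} :=
        swap_card htt hij hcov
      have hmem : (i, j) ∈ inversions τ τ' := mem_inversions.mpr ⟨hij, hji'⟩
      have h2 : (inversions (swp τ i j) τ').card = n - 1 := by
        rw [inversions_swp htt htt' hij hji', hcard]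
      rw [h1]
      exact ih (n - 1) (by omega) (swp τ i j) (swp_tt htt hij hcov) h2

end connect

section ttcount

variable {B : Set V} {m : ℕ}

noncomputable def rk (τ : V → V → Prop) (a : V) : ℕ := {b | τ a b}.ncard

lemma rk_lt_rk [Finite V] {τ : V → V → Prop} (htt : IsTT B τ) {a b : V} (h : τ a b) :
    rk τ b < rk τ a := by
  apply Set.ncard_lt_ncard
  · constructor
    · intro k hk
      exact htt.tr a b k h hk
    · intro hsub
      exact (htt.mem b b (hsub h)).2.2 rfl
  · exact Set.toFinite _

lemma rk_iff [Finite V] {τ : V → V → Prop} (htt : IsTT B τ) {a b : V}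
    (ha : a ∈ B) (hb : b ∈ B) (hne : a ≠ b) : τ a b ↔ rk τ b < rk τ a := by
  constructor
  · exact rk_lt_rk htt
  · intro hlt
    by_contra hab
    have hba : τ b a := by
      have := htt.tot a b ha hb hne
      tauto
    exact lt_asymm hlt (rk_lt_rk htt hba)

lemma card_TT [Fintype V] (hm : Nat.card B = m) :
    Nat.card {τ : V → V → Prop // IsTT B τ} = m.factorial := by
  classical
  haveI : Fintype ↥B := Fintype.ofFinite ↥B
  have hc : Fintype.card ↥B = m := by rw [← Nat.card_eq_fintype_card, hm]
  have hrk_lt : ∀ (τ : V → V → Prop), IsTT B τ → ∀ a, a ∈ B → rk τ a < m := by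
    intro τ htt a ha
    have hsub : {b | τ a b} ⊆ B \ {a} := by
      intro b hbB
      exact ⟨(htt.mem a b hbB).2.1,
        fun hh => (htt.mem a b hbB).2.2 (Set.mem_singleton_iff.mp hh).symm⟩
    have h1 : {b | τ a b}.ncard ≤ (B \ {a}).ncard :=
      Set.ncard_le_ncard hsub (Set.toFinite _)
    have h2 : (B \ {a}).ncard = B.ncard - 1 :=
      Set.ncard_diff_singleton_of_mem ha
    have h3 : B.ncard = m := by rw [← Nat.card_coe_set_eq, hm]
    have h4 : 0 < m := by
      rw [← hc]
      exact Fintype.card_pos_iff.mpr ⟨⟨a, ha⟩⟩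
    show {b | τ a b}.ncard < m
    omega
  have key : ∀ (t : {τ : V → V → Prop // IsTT B τ}), Function.Bijective
      (fun a : ↥B => (⟨rk t.1 ↑a, hrk_lt t.1 t.2 ↑a a.2⟩ : Fin m)) := by
    rintro ⟨τ, htt⟩
    rw [Fintype.bijective_iff_injective_and_card]
    constructor
    · intro a b hab
      by_contra hne
      have hne' : (↑a : V) ≠ ↑b := fun hh => hne (Subtype.ext hh)
      have hval : rk τ ↑a = rk τ ↑b := by simpa using congrArg Fin.val hab
      have hor : τ ↑a ↑b ∨ τ ↑b ↑a := by
        have := htt.tot ↑a ↑b a.2 b.2 hne'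
        tauto
      rcases hor with h | h
      · exact absurd hval (Nat.ne_of_gt (rk_lt_rk htt h))
      · exact absurd hval (Nat.ne_of_lt (rk_lt_rk htt h))
    · simp [hc]
  set F : {τ : V → V → Prop // IsTT B τ} → (↥B ≃ Fin m) :=
    fun t => Equiv.ofBijective _ (key t) with hF
  set g : (↥B ≃ Fin m) → (V → V → Prop) :=
    fun e a b => ∃ (ha : a ∈ B) (hb : b ∈ B), e ⟨b, hb⟩ < e ⟨a, ha⟩ with hg
  have hgtt : ∀ e, IsTT B (g e) := by
    intro e
    constructor
    · rintro a b ⟨ha, hb, hlt⟩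
      refine ⟨ha, hb, ?_⟩
      rintro rfl
      exact lt_irrefl _ hlt
    · intro a b ha hb hne
      constructor
      · rintro ⟨_, _, h1⟩ ⟨_, _, h2⟩
        exact lt_asymm h1 h2
      · intro hno
        refine ⟨ha, hb, ?_⟩
        have hne2 : e ⟨b, hb⟩ ≠ e ⟨a, ha⟩ := by
          intro hh
          exact hne (congrArg Subtype.val (e.injective hh)).symm
        rcases lt_or_gt_of_ne hne2 with h | h
        · exact h
        · exact absurd ⟨hb, ha, h⟩ hno
    · rintro a b c ⟨ha, hb, h1⟩ ⟨_, hcB, h2⟩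
      exact ⟨ha, hcB, h2.trans h1⟩
  have hgF : ∀ t : {τ : V → V → Prop // IsTT B τ}, g (F t) = t.1 := by
    rintro ⟨τ, htt⟩
    funext a b
    apply propext
    constructor
    · rintro ⟨ha, hb, hlt⟩
      have hlt' : rk τ b < rk τ a := hlt
      have hne : a ≠ b := by
        rintro rfl
        exact lt_irrefl _ hlt'
      exact (rk_iff htt ha hb hne).mpr hlt'
    · intro h
      obtain ⟨ha, hb, hne⟩ := htt.mem a b h
      exact ⟨ha, hb, (rk_iff htt ha hb hne).mp h⟩
  have hFg : ∀ (e : ↥B ≃ Fin m) (a : ↥B), rk (g e) ↑a = (e a : ℕ) := by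
    intro e a
    have hseteq : {b | g e ↑a b} = Subtype.val '' (⇑e ⁻¹' (Set.Iio (e a))) := by
      ext b
      simp only [Set.mem_image, Set.mem_preimage, Set.mem_Iio, Set.mem_setOf_eq]
      constructor
      · rintro ⟨haB, hb, hlt⟩
        exact ⟨⟨b, hb⟩, hlt, rfl⟩
      · rintro ⟨x, hx, rfl⟩
        exact ⟨a.2, x.2, hx⟩
    rw [rk, hseteq, Set.ncard_image_of_injective _ Subtype.val_injective]
    have hpre : ⇑e ⁻¹' (Set.Iio (e a)) = ⇑e.symm '' (Set.Iio (e a)) := by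
      ext x
      simp
    rw [hpre, Set.ncard_image_of_injective _ e.symm.injective,
      ← Nat.card_coe_set_eq, Nat.card_eq_fintype_card]
    rw [← Set.toFinset_card, Set.toFinset_Iio, Fin.card_Iio]
  have E : {τ : V → V → Prop // IsTT B τ} ≃ (↥B ≃ Fin m) :=
    { toFun := F
      invFun := fun e => ⟨g e, hgtt e⟩
      left_inv := fun t => Subtype.ext (hgF t)
      right_inv := fun e => Equiv.ext fun a => Fin.ext (hFg e a) }
  rw [Nat.card_congr E, Nat.card_eq_fintype_card,
    Fintype.card_equiv (Fintype.equivFinOfCardEq hc), hc]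

end ttcount

end SC

/-- The number of acyclic orientations of `G` respecting `u`
(semicompatible orientations) equals `α(Ĝ)/m!`, where `α(Ĝ)` is the number of
acyclic orientations of the graph `Ĝ` obtained from `G` by adding all edges between
boundary nodes. -/
theorem semicompatible_orientation_count
    (V : Type*) [Fintype V] (G : SimpleGraph V) (hconn : G.Connected)
    (B : Set V) (m : ℕ) (hm : Nat.card B = m) (hm2 : 2 ≤ m)
    (hBindep : ∀ i ∈ B, ∀ j ∈ B, ¬ G.Adj i j)
    (u : V → ℝ) (hu : Set.InjOn u B)
    (Ghat : SimpleGraph V)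
    (hGhat : ∀ i j : V, Ghat.Adj i j ↔ (G.Adj i j ∨ (i ∈ B ∧ j ∈ B ∧ i ≠ j))) :
    Nat.card {o : V → V → Prop //
        (∀ i j : V, o i j → G.Adj i j) ∧
        (∀ i j : V, G.Adj i j → (o i j ↔ ¬ o j i)) ∧
        (∀ v : V, ¬ Relation.TransGen o v v) ∧
        (∀ i ∈ B, ∀ j ∈ B, Relation.TransGen o i j → u j < u i)} * m.factorial =
      Nat.card {o : V → V → Prop //
        (∀ i j : V, o i j → Ghat.Adj i j) ∧
        (∀ i j : V, Ghat.Adj i j → (o i j ↔ ¬ o j i)) ∧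
        (∀ v : V, ¬ Relation.TransGen o v v)} := by
  classical
  open SC in
  set τu : V → V → Prop := fun a b => a ∈ B ∧ b ∈ B ∧ u b < u a with hτu
  have httu : IsTT B τu := by
    constructor
    · rintro a b ⟨ha, hb, hlt⟩
      refine ⟨ha, hb, ?_⟩
      rintro rfl
      exact lt_irrefl _ hlt
    · intro a b ha hb hne
      have hne2 : u a ≠ u b := fun hh => hne (hu ha hb hh)
      constructor
      · rintro ⟨_, _, hlt⟩ hba
        exact lt_asymm hlt hba.2.2
      · intro hno
        refine ⟨ha, hb, ?_⟩
        rcases lt_or_gt_of_ne hne2 with h | h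
        · exact absurd ⟨hb, ha, h⟩ hno
        · exact h
    · rintro a b c ⟨ha, hb, h1⟩ ⟨_, hcB, h2⟩
      exact ⟨ha, hcB, h2.trans h1⟩
  have e1 : {o : V → V → Prop //
        (∀ i j : V, o i j → G.Adj i j) ∧
        (∀ i j : V, G.Adj i j → (o i j ↔ ¬ o j i)) ∧
        (∀ v : V, ¬ Relation.TransGen o v v) ∧
        (∀ i ∈ B, ∀ j ∈ B, Relation.TransGen o i j → u j < u i)} ≃
      {σ : V → V → Prop // OG G σ ∧ Compat B σ τu} := by
    refine Equiv.subtypeEquivRight ?_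
    intro o
    constructor
    · rintro ⟨h1, h2, h3, h4⟩
      exact ⟨⟨h1, h2, h3⟩, fun a b ha hb htg => ⟨ha, hb, h4 a ha b hb htg⟩⟩
    · rintro ⟨⟨h1, h2, h3⟩, h4⟩
      exact ⟨h1, h2, h3, fun a ha b hb htg => (h4 a b ha hb htg).2.2⟩
  have e0 : {o : V → V → Prop //
        (∀ i j : V, o i j → Ghat.Adj i j) ∧
        (∀ i j : V, Ghat.Adj i j → (o i j ↔ ¬ o j i)) ∧
        (∀ v : V, ¬ Relation.TransGen o v v)} ≃ {o : V → V → Prop // OG Ghat o} :=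
    Equiv.subtypeEquivRight (fun _ => Iff.rfl)
  have E2 : {p : (V → V → Prop) × (V → V → Prop) //
        OG G p.1 ∧ IsTT B p.2 ∧ Compat B p.1 p.2} ≃
      Σ _t : {τ : V → V → Prop // IsTT B τ},
        {σ : V → V → Prop // OG G σ ∧ Compat B σ τu} := by
    refine Equiv.trans ?_ (Equiv.sigmaCongrRight
      (fun t => Classical.choice (Finite.card_eq.mp
        (card_compat_eq (G := G) t.2 httu))))
    exact
      { toFun := fun p => ⟨⟨p.1.2, p.2.2.1⟩, ⟨p.1.1, p.2.1, p.2.2.2⟩⟩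
        invFun := fun q => ⟨(q.2.1, q.1.1), q.2.2.1, q.1.2, q.2.2.2⟩
        left_inv := fun ⟨⟨σ, τ⟩, h1, h2, h3⟩ => rfl
        right_inv := fun ⟨⟨τ, h2⟩, ⟨σ, h1, h3⟩⟩ => rfl }
  have h1 : Nat.card {o : V → V → Prop //
        (∀ i j : V, o i j → G.Adj i j) ∧
        (∀ i j : V, G.Adj i j → (o i j ↔ ¬ o j i)) ∧
        (∀ v : V, ¬ Relation.TransGen o v v) ∧
        (∀ i ∈ B, ∀ j ∈ B, Relation.TransGen o i j → u j < u i)} =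
      Nat.card {σ : V → V → Prop // OG G σ ∧ Compat B σ τu} := Nat.card_congr e1
  have h2 : Nat.card {o : V → V → Prop //
        (∀ i j : V, o i j → Ghat.Adj i j) ∧
        (∀ i j : V, Ghat.Adj i j → (o i j ↔ ¬ o j i)) ∧
        (∀ v : V, ¬ Relation.TransGen o v v)} =
      m.factorial * Nat.card {σ : V → V → Prop // OG G σ ∧ Compat B σ τu} := by
    rw [Nat.card_congr ((e0.trans (hatEquiv hBindep hGhat)).trans
      (E2.trans (Equiv.sigmaEquivProd _ _))), Nat.card_prod, card_TT hm]
  rw [h1, h2, Nat.mul_comm]
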